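/- For every real k with 0 < k < 1, letting k' = sqrt(1-k²), the integral ∫₀^{π/2} ln(tan θ)/sqrt(1 - k²·sin²θ) dθ equals -(1/2)·ln(k')·K(k). -/

import Mathlib

open Real
open Set MeasureTheory

noncomputable def Faux (c t : ℝ) : ℝ := 1 / Real.sqrt ((1 + t ^ 2) * (1 + c ^ 2 * t ^ 2))

lemma Faux_pos_denom (c t : ℝ) : 0 < (1 + t ^ 2) * (1 + c ^ 2 * t ^ 2) := by positivity

lemma Faux_cont (c : ℝ) : Continuous (Faux c) := by
  apply continuous_const.div
  · exact (Real.continuous_sqrt.comp (by continuity))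
  · intro t
    exact (Real.sqrt_pos.2 (Faux_pos_denom c t)).ne'

lemma image_arctan : Real.arctan '' (Ioi 0) = Ioo 0 (Real.pi / 2) := by
  ext x
  constructor
  · rintro ⟨t, ht, rfl⟩
    refine ⟨?_, Real.arctan_lt_pi_div_two t⟩
    have := Real.arctan_strictMono ht
    simpa using this
  · rintro ⟨h0, h2⟩
    refine ⟨Real.tan x, Real.tan_pos_of_pos_of_lt_pi_div_two h0 h2, ?_⟩
    exact Real.arctan_tan (by linarith [Real.pi_pos]) h2

lemma image_inv (c : ℝ) (hc : 0 < c) : (fun u : ℝ => 1 / (c * u)) '' (Ioi 0) = Ioi 0 := by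
  ext x
  constructor
  · rintro ⟨u, hu, rfl⟩
    have hu' : (0:ℝ) < u := hu
    exact mem_Ioi.2 (by positivity)
  · intro hx
    have hx' : (0:ℝ) < x := hx
    refine ⟨1 / (c * x), mem_Ioi.2 (by positivity), ?_⟩
    field_simp

lemma subst_arctan (g : ℝ → ℝ) :
    ∫ θ in Ioo (0:ℝ) (Real.pi / 2), g θ
      = ∫ t in Ioi (0:ℝ), |1 / (1 + t ^ 2)| • g (Real.arctan t) := by
  rw [← image_arctan]
  exact integral_image_eq_integral_abs_deriv_smul measurableSet_Ioi
    (fun x _ => (Real.hasDerivAt_arctan x).hasDerivWithinAt)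
    (fun a _ b _ h => Real.arctan_injective h) g

lemma subst_inv (c : ℝ) (hc : 0 < c) (g : ℝ → ℝ) :
    ∫ t in Ioi (0:ℝ), g t
      = ∫ u in Ioi (0:ℝ), |(-(c * 1) / (c * u) ^ 2)| • g (1 / (c * u)) := by
  nth_rewrite 1 [← image_inv c hc]
  apply integral_image_eq_integral_abs_deriv_smul measurableSet_Ioi
  · intro x hx
    have hx' : (0:ℝ) < x := hx
    have h : HasDerivAt (fun u : ℝ => 1 / (c * u)) (-(c * 1) / (c * x) ^ 2) x := by
      have h0 := ((hasDerivAt_id x).const_mul c).inv (by positivity : c * id x ≠ 0)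
      have e : (fun u : ℝ => 1 / (c * u)) = (fun y => c * id y)⁻¹ := by funext u; simp [one_div]
      rw [e]; exact h0
    exact h.hasDerivWithinAt
  · intro a ha b hb h
    have ha' : (0:ℝ) < a := ha
    have hb' : (0:ℝ) < b := hb
    field_simp at h
    exact h.symm

lemma sqrt_one_sub_sin_arctan (k c t : ℝ) (hc : 0 < c) (hc2 : c ^ 2 = 1 - k ^ 2) :
    Real.sqrt (1 - k ^ 2 * Real.sin (Real.arctan t) ^ 2)
      = Real.sqrt (1 + c ^ 2 * t ^ 2) / Real.sqrt (1 + t ^ 2) := by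
  have h1 : (0:ℝ) < 1 + t ^ 2 := by positivity
  have hs : Real.sqrt (1 + t ^ 2) ^ 2 = 1 + t ^ 2 := Real.sq_sqrt h1.le
  have h2 : Real.sin (Real.arctan t) ^ 2 = t ^ 2 / (1 + t ^ 2) := by
    rw [Real.sin_arctan, div_pow, hs]
  rw [h2, show 1 - k ^ 2 * (t ^ 2 / (1 + t ^ 2)) = (1 + c ^ 2 * t ^ 2) / (1 + t ^ 2) by
    rw [hc2]; field_simp; ring]
  exact Real.sqrt_div (by positivity) _

lemma key1 (k c t : ℝ) (hc : 0 < c) (hc2 : c ^ 2 = 1 - k ^ 2) :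
    |1 / (1 + t ^ 2)| * (Real.log (Real.tan (Real.arctan t)) /
        Real.sqrt (1 - k ^ 2 * Real.sin (Real.arctan t) ^ 2))
      = Real.log t * Faux c t := by
  rw [Real.tan_arctan, sqrt_one_sub_sin_arctan k c t hc hc2, abs_of_pos (by positivity)]
  unfold Faux
  have h1 : (0:ℝ) < 1 + t ^ 2 := by positivity
  have h2 : (0:ℝ) < 1 + c ^ 2 * t ^ 2 := by positivity
  have ha : Real.sqrt (1 + t ^ 2) ^ 2 = 1 + t ^ 2 := Real.sq_sqrt h1.le
  have ha0 : 0 < Real.sqrt (1 + t ^ 2) := Real.sqrt_pos.2 h1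
  have hb0 : 0 < Real.sqrt (1 + c ^ 2 * t ^ 2) := Real.sqrt_pos.2 h2
  rw [Real.sqrt_mul h1.le, ← ha]
  field_simp
  rw [Real.sqrt_sq ha0.le]; ring

lemma key2 (k c t : ℝ) (hc : 0 < c) (hc2 : c ^ 2 = 1 - k ^ 2) :
    |1 / (1 + t ^ 2)| * (1 / Real.sqrt (1 - k ^ 2 * Real.sin (Real.arctan t) ^ 2))
      = Faux c t := by
  rw [sqrt_one_sub_sin_arctan k c t hc hc2, abs_of_pos (by positivity)]
  unfold Faux
  have h1 : (0:ℝ) < 1 + t ^ 2 := by positivity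
  have h2 : (0:ℝ) < 1 + c ^ 2 * t ^ 2 := by positivity
  have ha : Real.sqrt (1 + t ^ 2) ^ 2 = 1 + t ^ 2 := Real.sq_sqrt h1.le
  have ha0 : 0 < Real.sqrt (1 + t ^ 2) := Real.sqrt_pos.2 h1
  have hb0 : 0 < Real.sqrt (1 + c ^ 2 * t ^ 2) := Real.sqrt_pos.2 h2
  rw [Real.sqrt_mul h1.le, ← ha]
  field_simp
  rw [Real.sqrt_sq ha0.le]

lemma Faux_inv (c u : ℝ) (hc : 0 < c) (hu : 0 < u) :
    Faux c (1 / (c * u)) = c * u ^ 2 * Faux c u := by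
  unfold Faux
  have h : (1 + (1 / (c * u)) ^ 2) * (1 + c ^ 2 * (1 / (c * u)) ^ 2)
      = ((1 + u ^ 2) * (1 + c ^ 2 * u ^ 2)) / (c * u ^ 2) ^ 2 := by
    field_simp
    ring
  rw [h, Real.sqrt_div (by positivity), Real.sqrt_sq (by positivity), one_div_div, mul_one_div]

lemma key3 (c u : ℝ) (hc : 0 < c) (hu : 0 < u) :
    |(-(c * 1) / (c * u) ^ 2)| * (Real.log (1 / (c * u)) * Faux c (1 / (c * u)))
      = -Real.log c * Faux c u - Real.log u * Faux c u := by
  rw [Faux_inv c u hc hu,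
    show -(c * 1) / (c * u) ^ 2 = -(c / (c * u) ^ 2) by ring, abs_neg,
    abs_of_pos (by positivity), one_div, Real.log_inv,
    Real.log_mul (by positivity : (0:ℝ) < c).ne' hu.ne']
  field_simp
  ring

lemma Faux_nonneg (c t : ℝ) : 0 ≤ Faux c t := by unfold Faux; positivity

lemma Faux_le_one (c t : ℝ) : Faux c t ≤ 1 := by
  unfold Faux
  rw [div_le_one (Real.sqrt_pos.2 (Faux_pos_denom c t))]
  exact (Real.le_sqrt' one_pos).2 (by nlinarith [sq_nonneg t, sq_nonneg (c*t)])

lemma Faux_le (c t : ℝ) (hc : 0 < c) (ht : 0 < t) : Faux c t ≤ 1 / (c * t ^ 2) := by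
  unfold Faux
  have h : c * t ^ 2 ≤ Real.sqrt ((1 + t ^ 2) * (1 + c ^ 2 * t ^ 2)) := by
    rw [show c * t ^ 2 = Real.sqrt ((c * t ^ 2) ^ 2) by rw [Real.sqrt_sq (by positivity)]]
    exact Real.sqrt_le_sqrt (by nlinarith [sq_nonneg t, sq_nonneg (c*t)])
  exact one_div_le_one_div_of_le (by positivity) h

lemma rpow_neg_two (t : ℝ) (ht : 0 < t) : t ^ (-2 : ℝ) = 1 / t ^ 2 := by
  rw [Real.rpow_neg ht.le, show ((2:ℝ)) = ((2:ℕ):ℝ) by norm_num, Real.rpow_natCast, one_div]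

lemma intF (c : ℝ) (hc : 0 < c) : IntegrableOn (Faux c) (Ioi (0:ℝ)) := by
  rw [show Ioi (0:ℝ) = Ioc 0 1 ∪ Ioi 1 from (Ioc_union_Ioi_eq_Ioi zero_le_one).symm]
  apply IntegrableOn.union
  · exact (Faux_cont c).integrableOn_Ioc
  · have base : IntegrableOn (fun t : ℝ => (1 / c) * t ^ (-2 : ℝ)) (Ioi 1) :=
      (integrableOn_Ioi_rpow_of_lt (by norm_num) one_pos).const_mul _
    refine base.mono' ((Faux_cont c).aestronglyMeasurable.restrict) ?_
    filter_upwards [ae_restrict_mem measurableSet_Ioi] with t ht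
    have ht1 : (1:ℝ) < t := ht
    have ht0 : (0:ℝ) < t := by linarith
    rw [Real.norm_eq_abs, abs_of_nonneg (Faux_nonneg c t), rpow_neg_two t ht0]
    calc Faux c t ≤ 1 / (c * t ^ 2) := Faux_le c t hc ht0
      _ = 1 / c * (1 / t ^ 2) := by field_simp

lemma neg_log_le (t : ℝ) (ht : 0 < t) : -Real.log t ≤ 2 * t ^ (-(1:ℝ)/2) := by
  have hp : 0 < t ^ (-(1:ℝ)/2) := Real.rpow_pos_of_pos ht _
  have h := Real.log_le_sub_one_of_pos hp
  have hl : Real.log (t ^ (-(1:ℝ)/2)) = (-(1:ℝ)/2) * Real.log t := Real.log_rpow ht _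
  linarith

lemma log_le_sq (t : ℝ) (ht : 0 < t) : Real.log t ≤ 2 * t ^ ((1:ℝ)/2) := by
  have hp : 0 < t ^ ((1:ℝ)/2) := Real.rpow_pos_of_pos ht _
  have h := Real.log_le_sub_one_of_pos hp
  have hl : Real.log (t ^ ((1:ℝ)/2)) = ((1:ℝ)/2) * Real.log t := Real.log_rpow ht _
  linarith

lemma intLF (c : ℝ) (hc : 0 < c) :
    IntegrableOn (fun t => Real.log t * Faux c t) (Ioi (0:ℝ)) := by
  have meas : ∀ s : Set ℝ, AEStronglyMeasurable (fun t => Real.log t * Faux c t)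
      (volume.restrict s) :=
    fun s => (Real.measurable_log.mul (Faux_cont c).measurable).aestronglyMeasurable.restrict
  rw [show Ioi (0:ℝ) = Ioc 0 1 ∪ Ioi 1 from (Ioc_union_Ioi_eq_Ioi zero_le_one).symm]
  apply IntegrableOn.union
  · have base : IntegrableOn (fun t : ℝ => 2 * t ^ (-(1:ℝ)/2)) (Ioc (0:ℝ) 1) := by
      have h := (intervalIntegrable_iff_integrableOn_Ioc_of_le (zero_le_one (α := ℝ))).1
        (intervalIntegral.intervalIntegrable_rpow' (r := -(1:ℝ)/2) (by norm_num))
      exact h.const_mul 2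
    refine base.mono' (meas _) ?_
    filter_upwards [ae_restrict_mem measurableSet_Ioc] with t ht
    have ht0 : (0:ℝ) < t := ht.1
    rw [Real.norm_eq_abs, abs_mul, abs_of_nonneg (Faux_nonneg c t),
      abs_of_nonpos (Real.log_nonpos ht0.le ht.2)]
    calc -Real.log t * Faux c t ≤ -Real.log t * 1 := by
          exact mul_le_mul_of_nonneg_left (Faux_le_one c t)
            (neg_nonneg.2 (Real.log_nonpos ht0.le ht.2))
      _ ≤ 2 * t ^ (-(1:ℝ)/2) := by rw [mul_one]; exact neg_log_le t ht0
  · have base : IntegrableOn (fun t : ℝ => (2 / c) * t ^ (-(3:ℝ)/2)) (Ioi (1:ℝ)) :=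
      (integrableOn_Ioi_rpow_of_lt (by norm_num) one_pos).const_mul _
    refine base.mono' (meas _) ?_
    filter_upwards [ae_restrict_mem measurableSet_Ioi] with t ht
    have ht1 : (1:ℝ) < t := ht
    have ht0 : (0:ℝ) < t := by linarith
    have hlog : 0 ≤ Real.log t := Real.log_nonneg ht1.le
    rw [Real.norm_eq_abs, abs_mul, abs_of_nonneg (Faux_nonneg c t), abs_of_nonneg hlog]
    have key : (2 / c) * t ^ (-(3:ℝ)/2) = (2 * t ^ ((1:ℝ)/2)) * (1 / (c * t ^ 2)) := by
      rw [show (-(3:ℝ)/2) = (1:ℝ)/2 + (-2 : ℝ) by norm_num, Real.rpow_add ht0,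
        rpow_neg_two t ht0]
      field_simp
    rw [key]
    exact mul_le_mul (by linarith [log_le_sq t ht0]) (Faux_le c t hc ht0)
      (Faux_nonneg c t) (by positivity)

theorem stmt_16 (k : ℝ) (hk0 : 0 < k) (hk1 : k < 1) :
    ∫ θ in (0:ℝ)..(Real.pi / 2),
        Real.log (Real.tan θ) / Real.sqrt (1 - k ^ 2 * Real.sin θ ^ 2) =
      -(1 / 2) * Real.log (Real.sqrt (1 - k ^ 2)) *
        ∫ t in (0:ℝ)..(Real.pi / 2), 1 / Real.sqrt (1 - k ^ 2 * Real.sin t ^ 2) := by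
  have hk2 : (0:ℝ) < 1 - k ^ 2 := by nlinarith
  set c := Real.sqrt (1 - k ^ 2) with hcdef
  have hc : 0 < c := Real.sqrt_pos.2 hk2
  have hc2 : c ^ 2 = 1 - k ^ 2 := Real.sq_sqrt hk2.le
  have hpi : (0:ℝ) ≤ Real.pi / 2 := by positivity
  -- rewrite LHS
  have hL : (∫ θ in (0:ℝ)..(Real.pi / 2),
      Real.log (Real.tan θ) / Real.sqrt (1 - k ^ 2 * Real.sin θ ^ 2))
      = ∫ t in Ioi (0:ℝ), Real.log t * Faux c t := by
    rw [intervalIntegral.integral_of_le hpi, MeasureTheory.integral_Ioc_eq_integral_Ioo,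
      subst_arctan (fun θ => Real.log (Real.tan θ) / Real.sqrt (1 - k ^ 2 * Real.sin θ ^ 2))]
    refine setIntegral_congr_fun measurableSet_Ioi (fun t ht => ?_)
    rw [smul_eq_mul]
    exact key1 k c t hc hc2
  have hK : (∫ t in (0:ℝ)..(Real.pi / 2), 1 / Real.sqrt (1 - k ^ 2 * Real.sin t ^ 2))
      = ∫ t in Ioi (0:ℝ), Faux c t := by
    rw [intervalIntegral.integral_of_le hpi, MeasureTheory.integral_Ioc_eq_integral_Ioo,
      subst_arctan (fun θ => 1 / Real.sqrt (1 - k ^ 2 * Real.sin θ ^ 2))]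
    refine setIntegral_congr_fun measurableSet_Ioi (fun t ht => ?_)
    rw [smul_eq_mul]
    exact key2 k c t hc hc2
  rw [hL, hK]
  set I := ∫ t in Ioi (0:ℝ), Real.log t * Faux c t with hI
  set J := ∫ t in Ioi (0:ℝ), Faux c t with hJ
  have step : I = ∫ u in Ioi (0:ℝ),
      (-Real.log c * Faux c u - Real.log u * Faux c u) := by
    rw [hI, subst_inv c hc (fun t => Real.log t * Faux c t)]
    refine setIntegral_congr_fun measurableSet_Ioi (fun u hu => ?_)
    rw [smul_eq_mul]
    exact key3 c u hc hu
  have split : (∫ u in Ioi (0:ℝ),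
      (-Real.log c * Faux c u - Real.log u * Faux c u))
      = -Real.log c * J - I := by
    rw [integral_sub ((intF c hc).const_mul _) (intLF c hc),
      MeasureTheory.integral_const_mul]
  have h2 : I = -Real.log c * J - I := step.trans split
  linear_combination (1/2 : ℝ) * h2
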